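/- arXiv:2307.09850 — 2 statements merged into one kernel-verified Lean document; each statement's English description precedes it below -/
import Mathlib

section
/- Let n be a nonnegative integer and let B be a Binomial(n, 1/2) random variable. Then E[B / (1 + n − B)] = 1 − 2^{−n}. Equivalently, Σ_{k=0}^{n} C(n,k)·2^{−n}·k/(1+n−k) = 1 − 2^{−n}; in particular this expectation is at most 1. -/
open MeasureTheory

lemma key_sum (n : ℕ) :
    ∑ k ∈ Finset.range (n + 1), (n.choose k : ℝ) * ((k : ℝ) / (1 + (n : ℝ) - (k : ℝ)))
      = 2 ^ n - 1 := by
  rw [Finset.sum_range_succ']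
  have h0 : (n.choose 0 : ℝ) * ((0 : ℕ) / (1 + (n : ℝ) - (0:ℕ))) = 0 := by simp
  rw [h0, add_zero]
  have hstep : ∀ k ∈ Finset.range n,
      (n.choose (k+1) : ℝ) * (((k+1 : ℕ) : ℝ) / (1 + (n : ℝ) - ((k+1 : ℕ) : ℝ)))
        = (n.choose k : ℝ) := by
    intro k hk
    rw [Finset.mem_range] at hk
    have hd : 1 + (n : ℝ) - ((k+1 : ℕ) : ℝ) = (n : ℝ) - k := by push_cast; ring
    rw [hd]
    have hne : (n : ℝ) - k ≠ 0 := by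
      have : (k : ℝ) < n := by exact_mod_cast hk
      linarith
    have hc : (n.choose (k+1) : ℝ) * (k+1) = (n.choose k : ℝ) * ((n : ℝ) - k) := by
      have h2 := congrArg (Nat.cast (R := ℝ)) (Nat.choose_succ_right_eq n k)
      push_cast [Nat.cast_sub hk.le] at h2
      linarith
    field_simp
    push_cast at hc ⊢
    linarith
  rw [Finset.sum_congr rfl hstep]
  have h3 : ∑ k ∈ Finset.range (n+1), (n.choose k : ℝ) = 2 ^ n := by
    exact_mod_cast congrArg (Nat.cast : ℕ → ℝ) (Nat.sum_range_choose n)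
  rw [Finset.sum_range_succ] at h3
  simp at h3 ⊢
  linarith

lemma binomial_half_toReal (n : ℕ) (k : Fin (n+1)) :
    ((PMF.binomial (1/2) (by norm_num) n) k).toReal = (n.choose k : ℝ) * (2:ℝ)^(-(n:ℤ)) := by
  rw [PMF.binomial_apply]
  rw [show ((1/2 : NNReal) : ENNReal) = 1/2 by norm_num]
  rw [show (1 - 1/2 : ENNReal) = 1/2 by rw [one_div, ENNReal.one_sub_inv_two],
    Fin.val_last, ← pow_add]
  have h : (k : ℕ) + (n - k) = n := by omega
  rw [h, ENNReal.toReal_mul, ENNReal.toReal_pow, zpow_neg, zpow_natCast]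
  simp [ENNReal.toReal_div]
  ring

/-- For `B ~ Binomial(n, 1/2)`, one has `E[B / (1 + n − B)] = 1 − 2^{−n}`:
both in the form of an expectation against the binomial PMF and as the
explicit sum `Σ_{k=0}^n C(n,k)·2^{−n}·k/(1+n−k) = 1 − 2^{−n}`; in particular
the expectation is at most `1`. -/
theorem binomial_expectation_ratio (n : ℕ) :
    (∑ k : Fin (n + 1),
        ((PMF.binomial (1 / 2) (by norm_num) n) k).toReal *
          ((k : ℝ) / (1 + (n : ℝ) - (k : ℝ))) = 1 - (2 : ℝ) ^ (-(n : ℤ))) ∧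
    (∑ k ∈ Finset.range (n + 1),
        (n.choose k : ℝ) * (2 : ℝ) ^ (-(n : ℤ)) * ((k : ℝ) / (1 + (n : ℝ) - (k : ℝ))) =
      1 - (2 : ℝ) ^ (-(n : ℤ))) ∧
    (∑ k ∈ Finset.range (n + 1),
        (n.choose k : ℝ) * (2 : ℝ) ^ (-(n : ℤ)) * ((k : ℝ) / (1 + (n : ℝ) - (k : ℝ))) ≤ 1) := by
  have hsum2 : ∑ k ∈ Finset.range (n + 1),
      (n.choose k : ℝ) * (2 : ℝ) ^ (-(n : ℤ)) * ((k : ℝ) / (1 + (n : ℝ) - (k : ℝ))) =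
      1 - (2 : ℝ) ^ (-(n : ℤ)) := by
    have heq : ∑ k ∈ Finset.range (n + 1),
        (n.choose k : ℝ) * (2 : ℝ) ^ (-(n : ℤ)) * ((k : ℝ) / (1 + (n : ℝ) - (k : ℝ))) =
        (2 : ℝ) ^ (-(n : ℤ)) * ∑ k ∈ Finset.range (n + 1),
          (n.choose k : ℝ) * ((k : ℝ) / (1 + (n : ℝ) - (k : ℝ))) := by
      rw [Finset.mul_sum]; apply Finset.sum_congr rfl; intros; ring
    rw [heq, key_sum, zpow_neg, zpow_natCast]
    have : (2:ℝ)^n ≠ 0 := by positivity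
    field_simp
  refine ⟨?_, hsum2, ?_⟩
  · have heq : ∑ k : Fin (n + 1),
        ((PMF.binomial (1 / 2) (by norm_num) n) k).toReal *
          ((k : ℝ) / (1 + (n : ℝ) - (k : ℝ))) =
        ∑ k : Fin (n + 1),
          (n.choose (k : ℕ) : ℝ) * (2 : ℝ) ^ (-(n : ℤ)) * (((k : ℕ) : ℝ) / (1 + (n : ℝ) - ((k : ℕ) : ℝ))) := by
      apply Finset.sum_congr rfl
      intro k _
      rw [binomial_half_toReal]
    rw [heq, Fin.sum_univ_eq_sum_range
      (fun k : ℕ => (n.choose k : ℝ) * (2 : ℝ) ^ (-(n : ℤ)) * ((k : ℝ) / (1 + (n : ℝ) - (k : ℝ))))]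
    exact hsum2
  · rw [hsum2]
    have : (0:ℝ) < (2 : ℝ) ^ (-(n : ℤ)) := by positivity
    linarith
end

section
/- (Averaging preserves the sign-flip invariance needed by the BC procedure, with quantization.) Let W^{(1)}, …, W^{(N)} be independent random vectors in ℝ^{m'}, let j be a coordinate such that the law of every W^{(i)} is invariant under flip_j, and let q^{(i)} : ℝ^{m'} → [0,∞)^{m'} be measurable. Define W_q^{(i)} by (W_q^{(i)})_k = sgn(W_k^{(i)})·q^{(i)}(|W^{(i)}|)_k and W̄ = (1/N) Σ_{i=1}^N W_q^{(i)}. Then the law of W̄ is invariant under flip_j. -/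
open MeasureTheory ProbabilityTheory

/-- The sign-flip map on coordinate `j`: negates the `j`-th coordinate and
leaves the others unchanged. -/
def flipCoord {m : ℕ} (j : Fin m) (w : Fin m → ℝ) : Fin m → ℝ :=
  fun i => if i = j then -w i else w i

lemma measurable_realSign : Measurable Real.sign := by
  have : Real.sign = fun r : ℝ => if r < 0 then (-1 : ℝ) else if 0 < r then 1 else 0 := by
    funext r; rfl
  rw [this]
  exact Measurable.ite measurableSet_Iio measurable_const
    (Measurable.ite measurableSet_Ioi measurable_const measurable_const)

lemma measurable_flipCoord {m : ℕ} (j : Fin m) : Measurable (flipCoord j) := by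
  apply measurable_pi_lambda
  intro i
  by_cases h : i = j
  · simp only [flipCoord, h, if_true]
    exact (measurable_pi_apply j).neg
  · simp only [flipCoord, h, if_false]
    exact measurable_pi_apply i

/-- Averaging quantized statistics preserves sign-flip invariance: if the
independent random vectors `W^{(1)}, …, W^{(N)}` in `ℝ^{m'}` all have laws
invariant under `flip_j`, `q^{(i)}` are measurable quantizers, and
`W̄ = (1/N) Σ_i W_q^{(i)}` with `(W_q^{(i)})_k = sgn(W_k^{(i)})·q^{(i)}(|W^{(i)}|)_k`,
then the law of `W̄` is invariant under `flip_j`. -/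
theorem averaged_quantized_flipInvariance
    {Ω : Type*} [MeasurableSpace Ω] (P : Measure Ω) [IsProbabilityMeasure P]
    (N m' : ℕ) (hN : 0 < N)
    (W : Fin N → Ω → (Fin m' → ℝ)) (hmeas : ∀ i, Measurable (W i))
    (hindep : iIndepFun W P)
    (j : Fin m')
    (hflip : ∀ i, (P.map (W i)).map (flipCoord j) = P.map (W i))
    (q : Fin N → (Fin m' → ℝ) → (Fin m' → ℝ)) (hqmeas : ∀ i, Measurable (q i))
    (hq : ∀ i v k, 0 ≤ q i v k) :
    (P.map (fun ω (k : Fin m') =>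
        (N : ℝ)⁻¹ * ∑ i, Real.sign (W i ω k) * q i (fun l => |W i ω l|) k)).map
        (flipCoord j) =
      P.map (fun ω (k : Fin m') =>
        (N : ℝ)⁻¹ * ∑ i, Real.sign (W i ω k) * q i (fun l => |W i ω l|) k) := by
  classical
  -- marginal laws
  set μ : Fin N → Measure (Fin m' → ℝ) := fun i => P.map (W i) with hμ
  have hprob : ∀ i, IsProbabilityMeasure (μ i) := fun i =>
    Measure.isProbabilityMeasure_map (hmeas i).aemeasurable
  haveI : ∀ i, SigmaFinite (μ i) := fun i => by haveI := hprob i; infer_instance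
  -- the averaging map
  set G : (Fin N → (Fin m' → ℝ)) → (Fin m' → ℝ) := fun w k =>
    (N : ℝ)⁻¹ * ∑ i, Real.sign (w i k) * q i (fun l => |w i l|) k with hG
  have hGmeas : Measurable G := by
    apply measurable_pi_lambda
    intro k
    apply Measurable.const_mul
    apply Finset.measurable_sum
    intro i _
    apply Measurable.mul
    · exact measurable_realSign.comp ((measurable_pi_apply k).comp (measurable_pi_apply i))
    · exact (measurable_pi_apply k).comp ((hqmeas i).comp
        (measurable_pi_lambda _ fun l => ((measurable_pi_apply l).comp
          (measurable_pi_apply i)).abs))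
  -- the coordinatewise flip on the product space
  set Φ : (Fin N → (Fin m' → ℝ)) → (Fin N → (Fin m' → ℝ)) := fun w i => flipCoord j (w i)
    with hΦ
  have hΦmeas : Measurable Φ :=
    measurable_pi_lambda _ fun i => (measurable_flipCoord j).comp (measurable_pi_apply i)
  -- equivariance: flipCoord j ∘ G = G ∘ Φ
  have hequiv : ∀ w, flipCoord j (G w) = G (Φ w) := by
    intro w
    funext k
    show (if k = j then -(G w k) else G w k)
        = (N : ℝ)⁻¹ * ∑ i, Real.sign (if k = j then -(w i k) else w i k) *
            q i (fun l => |if l = j then -(w i l) else w i l|) k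
    have habs : ∀ i : Fin N,
        (fun l => |if l = j then -(w i l) else w i l|) = fun l => |w i l| := by
      intro i; funext l; by_cases h : l = j <;> simp [h]
    simp only [habs]
    by_cases h : k = j
    · simp [if_pos h, hG, Real.sign_neg, neg_mul, mul_neg, Finset.sum_neg_distrib]
    · simp [if_neg h, hG]
  -- joint law equals product measure
  have hJmeas : Measurable (fun ω i => W i ω) :=
    measurable_pi_lambda _ fun i => hmeas i
  have hjoint : P.map (fun ω i => W i ω) = Measure.pi μ := by
    symm
    apply Measure.pi_eq
    intro s hs
    rw [Measure.map_apply hJmeas (MeasurableSet.univ_pi hs)]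
    have hpre : (fun ω i => W i ω) ⁻¹' Set.pi Set.univ s
        = ⋂ i ∈ Finset.univ, W i ⁻¹' s i := by
      ext ω; simp [Set.mem_pi]
    rw [hpre, hindep.measure_inter_preimage_eq_mul Finset.univ (fun i _ => hs i)]
    apply Finset.prod_congr rfl
    intro i _
    rw [hμ, Measure.map_apply (hmeas i) (hs i)]
  -- product measure is invariant under Φ
  have hpiflip : (Measure.pi μ).map Φ = Measure.pi μ := by
    symm
    apply Measure.pi_eq
    intro s hs
    rw [Measure.map_apply hΦmeas (MeasurableSet.univ_pi hs)]
    have hpre : Φ ⁻¹' Set.pi Set.univ s = Set.pi Set.univ fun i => flipCoord j ⁻¹' s i := by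
      ext w; simp [hΦ, Set.mem_pi]
    rw [hpre, Measure.pi_pi]
    apply Finset.prod_congr rfl
    intro i _
    show (P.map (W i)) (flipCoord j ⁻¹' s i) = (P.map (W i)) (s i)
    conv_rhs => rw [← hflip i]
    rw [Measure.map_apply (measurable_flipCoord j) (hs i)]
  -- put everything together
  have hWbar : (fun ω (k : Fin m') =>
      (N : ℝ)⁻¹ * ∑ i, Real.sign (W i ω k) * q i (fun l => |W i ω l|) k)
      = G ∘ (fun ω i => W i ω) := rfl
  rw [hWbar, ← Measure.map_map hGmeas hJmeas, hjoint,
    Measure.map_map (measurable_flipCoord j) hGmeas]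
  have : flipCoord j ∘ G = G ∘ Φ := funext hequiv
  rw [this, ← Measure.map_map hGmeas hΦmeas, hpiflip]
end
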